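/- A product of pure states inherits k-UDA: if |ψ⟩⟨ψ| on ⊗_{i=1}^m H_{A_i} and |φ⟩⟨φ| on ⊗_{i=1}^n H_{B_i} are both pure k-UDA states, then the pure state |ψ⟩⟨ψ| ⊗ |φ⟩⟨φ| is a k-UDA state of the (m+n)-partite system. -/

import Mathlib

open scoped BigOperators ComplexOrder

abbrev Idx {ι : Type} (κ : ι → Type) : Type := ∀ i, κ i

def IsDensity {α : Type} [Fintype α] (M : Matrix α α ℂ) : Prop :=
  M.PosSemidef ∧ M.trace = 1

def pureState {α : Type} (ψ : α → ℂ) : Matrix α α ℂ :=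
  fun a b => ψ a * star (ψ b)

noncomputable def ptrace {ι : Type} [Fintype ι] [DecidableEq ι] (κ : ι → Type)
    [∀ i, Fintype (κ i)] (S : Finset ι) (M : Matrix (Idx κ) (Idx κ) ℂ) :
    Matrix (∀ i : {i // i ∈ S}, κ i) (∀ i : {i // i ∈ S}, κ i) ℂ :=
  fun a b => ∑ c : ∀ i : {i // i ∉ S}, κ i,
    M (fun i => if h : i ∈ S then a ⟨i, h⟩ else c ⟨i, h⟩)
      (fun i => if h : i ∈ S then b ⟨i, h⟩ else c ⟨i, h⟩)

def IsUDA {ι : Type} [Fintype ι] [DecidableEq ι] (κ : ι → Type)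
    [∀ i, Fintype (κ i)] (k : ℕ) (ρ : Matrix (Idx κ) (Idx κ) ℂ) : Prop :=
  ∀ σ : Matrix (Idx κ) (Idx κ) ℂ, IsDensity σ →
    (∀ S : Finset ι, S.card = k → ptrace κ S σ = ptrace κ S ρ) → σ = ρ

instance sumElimFintype {ι₁ ι₂ : Type} {κ₁ : ι₁ → Type} {κ₂ : ι₂ → Type}
    [∀ i, Fintype (κ₁ i)] [∀ i, Fintype (κ₂ i)] :
    ∀ i, Fintype (Sum.elim κ₁ κ₂ i)
  | .inl i => inferInstanceAs (Fintype (κ₁ i))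
  | .inr i => inferInstanceAs (Fintype (κ₂ i))

def tensProd {ι₁ ι₂ : Type} {κ₁ : ι₁ → Type} {κ₂ : ι₂ → Type}
    (ρ : Matrix (Idx κ₁) (Idx κ₁) ℂ) (σ : Matrix (Idx κ₂) (Idx κ₂) ℂ) :
    Matrix (Idx (Sum.elim κ₁ κ₂)) (Idx (Sum.elim κ₁ κ₂)) ℂ :=
  fun a b => ρ (fun i => a (.inl i)) (fun i => b (.inl i)) *
             σ (fun i => a (.inr i)) (fun i => b (.inr i))

/-! ### Auxiliary lemmas -/
section UDAAux
open Matrix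

lemma UDA.exists_sqrt {α : Type} [Fintype α] [DecidableEq α] {A : Matrix α α ℂ}
    (hA : A.PosSemidef) : ∃ X : Matrix α α ℂ, Xᴴ = X ∧ X * X = A := by
  open MatrixOrder in
  obtain ⟨X, hX, -, hXX⟩ := CFC.exists_sqrt_of_isSelfAdjoint_of_quasispectrumRestricts
    hA.isHermitian (QuasispectrumRestricts.nnreal_of_nonneg hA.nonneg)
  exact ⟨X, hX, hXX⟩

lemma UDA.trace_zero_of_psd {α : Type} [Fintype α] [DecidableEq α] {A : Matrix α α ℂ}
    (hA : A.PosSemidef) (h : A.trace = 0) : A = 0 := by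
  obtain ⟨B, hBH, hBB⟩ := UDA.exists_sqrt hA
  obtain rfl : A = Bᴴ * B := by rw [hBH, hBB]
  rw [Matrix.conjTranspose_mul_self_eq_zero]
  have hsum : ∑ j, dotProduct (star (fun i => B i j)) (fun i => B i j) = 0 := by
    rw [← h]
    simp [Matrix.trace, Matrix.diag, Matrix.mul_apply, dotProduct, Matrix.conjTranspose_apply]
  have key : ∀ j ∈ (Finset.univ : Finset _),
      dotProduct (star (fun i => B i j)) (fun i => B i j) = 0 :=
    (Finset.sum_eq_zero_iff_of_nonneg
      (fun j _ => dotProduct_star_self_nonneg _)).mp hsum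
  ext i j
  have := dotProduct_star_self_eq_zero.mp (key j (Finset.mem_univ j))
  simpa using congr_fun this i

lemma UDA.eq_compress {α : Type} [Fintype α] [DecidableEq α]
    {σ P : Matrix α α ℂ} (hσ : σ.PosSemidef)
    (hP : Pᴴ = P) (hP2 : P * P = P)
    (htr : (σ * P).trace = σ.trace) : σ = P * σ * P := by
  set Q : Matrix α α ℂ := 1 - P with hQdef
  have hQH : Qᴴ = Q := by simp [hQdef, hP]
  have hQ2 : Q * Q = Q := by
    simp only [hQdef, Matrix.sub_mul, Matrix.mul_sub, Matrix.one_mul, Matrix.mul_one, hP2]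
    abel
  obtain ⟨s, hsH, hss⟩ := UDA.exists_sqrt hσ
  have hC : (Q * s)ᴴ * (Q * s) = s * Q * s := by
    rw [Matrix.conjTranspose_mul, hQH, hsH, Matrix.mul_assoc, ← Matrix.mul_assoc Q Q s, hQ2,
      ← Matrix.mul_assoc]
  have htr0 : (s * Q * s).trace = 0 := by
    rw [Matrix.trace_mul_cycle, hss, hQdef, Matrix.mul_sub, Matrix.mul_one,
      Matrix.trace_sub, htr, sub_self]
  have hQs : Q * s = 0 := by
    have := UDA.trace_zero_of_psd (hC ▸ Matrix.posSemidef_conjTranspose_mul_self (Q * s))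
      (hC ▸ htr0)
    exact Matrix.conjTranspose_mul_self_eq_zero.mp (by rw [hC, this])
  have hQσ : Q * σ = 0 := by rw [← hss, ← Matrix.mul_assoc, hQs, Matrix.zero_mul]
  have h1 : σ = P * σ := by
    have := hQσ; rw [hQdef, Matrix.sub_mul, Matrix.one_mul, sub_eq_zero] at this; exact this
  have hσQ : σ * Q = 0 := by
    have : (Q * σ)ᴴ = 0 := by rw [hQσ, Matrix.conjTranspose_zero]
    rwa [Matrix.conjTranspose_mul, hQH, hσ.1.eq] at this
  have h2 : σ = σ * P := by
    have := hσQ; rw [hQdef, Matrix.mul_sub, Matrix.mul_one, sub_eq_zero] at this; exact this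
  calc σ = P * σ := h1
    _ = P * (σ * P) := by rw [← h2]
    _ = P * σ * P := by rw [Matrix.mul_assoc]

lemma UDA.purity {X Y : Type} [Fintype X] [Fintype Y] [DecidableEq X] [DecidableEq Y]
    {σ : Matrix (X × Y) (X × Y) ℂ} (hσ : σ.PosSemidef)
    {ψ : X → ℂ} (hψ : ∑ x, ψ x * star (ψ x) = 1)
    (hA : ∀ x x', (∑ y, σ (x, y) (x', y)) = ψ x * star (ψ x')) (x x' : X) (y y' : Y) :
    σ (x, y) (x', y') =
      ψ x * star (ψ x') * (∑ u, ∑ u', star (ψ u) * (σ (u, y) (u', y') * ψ u')) := by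
  set P : Matrix (X × Y) (X × Y) ℂ :=
    fun p q => ψ p.1 * star (ψ q.1) * (if p.2 = q.2 then 1 else 0) with hPdef
  have hPH : Pᴴ = P := by
    ext p q
    rw [Matrix.conjTranspose_apply]
    simp only [Matrix.conjTranspose_apply, hPdef, star_mul', star_star]
    rcases eq_or_ne p.2 q.2 with h | h
    · simp [h]; ring
    · simp [h, Ne.symm h]
  have hP2 : P * P = P := by
    ext p q
    rw [Matrix.mul_apply]
    simp only [Matrix.mul_apply, hPdef, Fintype.sum_prod_type]
    rw [Finset.sum_comm]
    have : ∀ v : Y, ∑ u : X, ψ p.1 * star (ψ u) * (if p.2 = v then 1 else 0) *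
        (ψ u * star (ψ q.1) * (if v = q.2 then 1 else 0)) =
        (if p.2 = v then 1 else 0) * (if v = q.2 then 1 else 0) *
          (ψ p.1 * star (ψ q.1)) * ∑ u : X, ψ u * star (ψ u) := by
      intro v; rw [Finset.mul_sum]; apply Finset.sum_congr rfl; intro u _; ring
    rw [Finset.sum_congr rfl fun v _ => this v]
    simp only [hψ, mul_one]
    simp only [ite_mul, one_mul, zero_mul, Finset.sum_ite_eq, Finset.mem_univ, if_true]
    rcases eq_or_ne p.2 q.2 with h | h
    · simp [h]
    · simp [h]
  have htrs : σ.trace = 1 := by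
    simp only [Matrix.trace, Matrix.diag, Fintype.sum_prod_type]
    rw [Finset.sum_congr rfl fun x _ => hA x x, hψ]
  have htr : (σ * P).trace = σ.trace := by
    rw [htrs]
    simp only [Matrix.trace, Matrix.diag, Matrix.mul_apply, Fintype.sum_prod_type]
    simp only [Matrix.trace, Matrix.diag, Matrix.mul_apply, Fintype.sum_prod_type, hPdef,
      mul_ite, mul_one, mul_zero, Finset.sum_ite_eq, Finset.sum_ite_eq', Finset.mem_univ,
      if_true]
    rw [Finset.sum_congr rfl fun x _ => Finset.sum_comm]
    have e1 : ∀ x : X, ∑ u : X, ∑ y : Y, σ (x, y) (u, y) * (ψ u * star (ψ x)) =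
        ∑ u : X, (ψ x * star (ψ x)) * (ψ u * star (ψ u)) := by
      intro x
      refine Finset.sum_congr rfl fun u _ => ?_
      rw [← Finset.sum_mul, hA]; ring
    rw [Finset.sum_congr rfl fun x _ => e1 x]
    rw [← Finset.sum_mul_sum, hψ, one_mul]
  have hcomp := UDA.eq_compress hσ hPH hP2 htr
  conv_lhs => rw [hcomp]
  simp only [Matrix.mul_apply, Fintype.sum_prod_type]
  simp only [Matrix.mul_apply, Fintype.sum_prod_type, hPdef, mul_ite, mul_one, mul_zero,
    ite_mul, zero_mul, one_mul, Finset.sum_ite_eq, Finset.sum_ite_eq', Finset.mem_univ, if_true]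
  simp only [Finset.sum_mul]
  rw [Finset.sum_comm]
  simp only [Finset.mul_sum]
  refine Finset.sum_congr rfl fun u _ => ?_
  refine Finset.sum_congr rfl fun u' _ => ?_
  ring

end UDAAux

noncomputable section UDAPlumb
variable {m n : ℕ} {κA : Fin m → Type} {κB : Fin n → Type}
  [∀ i, Fintype (κA i)] [∀ i, Fintype (κB i)]

def UDA.glue (x : Idx κA) (y : Idx κB) : Idx (Sum.elim κA κB) :=
  fun i => match i with
  | .inl j => x j
  | .inr j => y j

def UDA.gl (p : Idx κA × Idx κB) : Idx (Sum.elim κA κB) := UDA.glue p.1 p.2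

def UDA.glEquiv : (Idx κA × Idx κB) ≃ Idx (Sum.elim κA κB) where
  toFun := UDA.gl
  invFun a := (fun j => a (.inl j), fun j => a (.inr j))
  left_inv p := rfl
  right_inv a := funext fun i => by cases i <;> rfl

def UDA.trR {X Y : Type} [Fintype Y] (M : Matrix (X × Y) (X × Y) ℂ) : Matrix X X ℂ :=
  fun x x' => ∑ y, M (x, y) (x', y)

def UDA.trL {X Y : Type} [Fintype X] (M : Matrix (X × Y) (X × Y) ℂ) : Matrix Y Y ℂ :=
  fun y y' => ∑ x, M (x, y) (x, y')

lemma UDA.trR_posSemidef {X Y : Type} [Fintype X] [Fintype Y]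
    {M : Matrix (X × Y) (X × Y) ℂ} (hM : M.PosSemidef) : (UDA.trR M).PosSemidef := by
  have : UDA.trR M = ∑ y : Y, M.submatrix (fun x => (x, y)) (fun x => (x, y)) := by
    ext x x'; simp [UDA.trR, Matrix.sum_apply]
  rw [this]
  exact Finset.sum_induction _ _ (fun a b ha hb => ha.add hb) Matrix.PosSemidef.zero
    (fun y _ => hM.submatrix _)

lemma UDA.trL_posSemidef {X Y : Type} [Fintype X] [Fintype Y]
    {M : Matrix (X × Y) (X × Y) ℂ} (hM : M.PosSemidef) : (UDA.trL M).PosSemidef := by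
  have : UDA.trL M = ∑ x : X, M.submatrix (fun y => (x, y)) (fun y => (x, y)) := by
    ext y y'; simp [UDA.trL, Matrix.sum_apply]
  rw [this]
  exact Finset.sum_induction _ _ (fun a b ha hb => ha.add hb) Matrix.PosSemidef.zero
    (fun x _ => hM.submatrix _)

lemma UDA.trR_trace {X Y : Type} [Fintype X] [Fintype Y] (M : Matrix (X × Y) (X × Y) ℂ) :
    (UDA.trR M).trace = M.trace := by
  simp [Matrix.trace, Matrix.diag, UDA.trR, Fintype.sum_prod_type]

lemma UDA.trL_trace {X Y : Type} [Fintype X] [Fintype Y] (M : Matrix (X × Y) (X × Y) ℂ) :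
    (UDA.trL M).trace = M.trace := by
  simp only [Matrix.trace, Matrix.diag, UDA.trL, Fintype.sum_prod_type]
  exact Finset.sum_comm

def UDA.inlEmb (m n : ℕ) : Fin m ↪ Fin m ⊕ Fin n := ⟨Sum.inl, Sum.inl_injective⟩
def UDA.inrEmb (m n : ℕ) : Fin n ↪ Fin m ⊕ Fin n := ⟨Sum.inr, Sum.inr_injective⟩

def UDA.liftA (S₀ : Finset (Fin m)) (a : ∀ j : {j // j ∈ S₀}, κA j) :
    ∀ i : {i // i ∈ S₀.map (UDA.inlEmb m n)}, Sum.elim κA κB i.1 :=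
  fun i => match i with
  | ⟨.inl j, h⟩ => a ⟨j, by simpa [UDA.inlEmb] using h⟩
  | ⟨.inr j, h⟩ => absurd h (by simp [UDA.inlEmb])

def UDA.liftB (S₀ : Finset (Fin n)) (b : ∀ j : {j // j ∈ S₀}, κB j) :
    ∀ i : {i // i ∈ S₀.map (UDA.inrEmb m n)}, Sum.elim κA κB i.1 :=
  fun i => match i with
  | ⟨.inl j, h⟩ => absurd h (by simp [UDA.inrEmb])
  | ⟨.inr j, h⟩ => b ⟨j, by simpa [UDA.inrEmb] using h⟩

def UDA.compEquivA (S₀ : Finset (Fin m)) :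
    ((∀ j : {j // j ∉ S₀}, κA j) × Idx κB) ≃
      (∀ i : {i // i ∉ S₀.map (UDA.inlEmb m n)}, Sum.elim κA κB i.1) where
  toFun p := fun i => match i with
    | ⟨.inl j, h⟩ => p.1 ⟨j, by simpa [UDA.inlEmb] using h⟩
    | ⟨.inr j, _⟩ => p.2 j
  invFun d := (fun j => d ⟨.inl j, by simpa [UDA.inlEmb] using j.2⟩,
               fun j => d ⟨.inr j, by simp [UDA.inlEmb]⟩)
  left_inv p := rfl
  right_inv d := funext fun i => by
    obtain ⟨i, h⟩ := i
    cases i <;> rfl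

def UDA.compEquivB (S₀ : Finset (Fin n)) :
    ((∀ j : {j // j ∉ S₀}, κB j) × Idx κA) ≃
      (∀ i : {i // i ∉ S₀.map (UDA.inrEmb m n)}, Sum.elim κA κB i.1) where
  toFun p := fun i => match i with
    | ⟨.inl j, _⟩ => p.2 j
    | ⟨.inr j, h⟩ => p.1 ⟨j, by simpa [UDA.inrEmb] using h⟩
  invFun d := (fun j => d ⟨.inr j, by simpa [UDA.inrEmb] using j.2⟩,
               fun j => d ⟨.inl j, by simp [UDA.inrEmb]⟩)
  left_inv p := rfl
  right_inv d := funext fun i => by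
    obtain ⟨i, h⟩ := i
    cases i <;> rfl

lemma UDA.ptrace_inl (M : Matrix (Idx (Sum.elim κA κB)) (Idx (Sum.elim κA κB)) ℂ)
    (S₀ : Finset (Fin m)) (a b : ∀ j : {j // j ∈ S₀}, κA j) :
    ptrace κA S₀ (UDA.trR (M.submatrix UDA.gl UDA.gl)) a b
      = ptrace (Sum.elim κA κB) (S₀.map (UDA.inlEmb m n)) M
          (UDA.liftA S₀ a) (UDA.liftA S₀ b) := by
  classical
  unfold ptrace UDA.trR
  have key : ∀ (u : ∀ j : {j // j ∈ S₀}, κA j) (c : ∀ j : {j // j ∉ S₀}, κA j) (y : Idx κB),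
      (fun i => if h : i ∈ S₀.map (UDA.inlEmb m n) then UDA.liftA S₀ u ⟨i, h⟩
          else UDA.compEquivA S₀ (c, y) ⟨i, h⟩)
        = UDA.gl (fun j => if h : j ∈ S₀ then u ⟨j, h⟩ else c ⟨j, h⟩, y) := by
    intro u c y
    funext i
    cases i with
    | inl j =>
      by_cases hj : j ∈ S₀
      · rw [dif_pos (by simpa [UDA.inlEmb] using hj)]
        show UDA.liftA S₀ u ⟨Sum.inl j, _⟩ = _
        simp only [UDA.gl, UDA.glue]
        rw [dif_pos hj]
        rfl
      · rw [dif_neg (by simpa [UDA.inlEmb] using hj)]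
        show UDA.compEquivA S₀ (c, y) ⟨Sum.inl j, _⟩ = _
        simp only [UDA.gl, UDA.glue]
        rw [dif_neg hj]
        rfl
    | inr j =>
      rw [dif_neg (by simp [UDA.inlEmb])]
      rfl
  refine Eq.symm ?_
  rw [← Equiv.sum_comp (UDA.compEquivA S₀), Fintype.sum_prod_type]
  refine Finset.sum_congr rfl fun c _ => Finset.sum_congr rfl fun y _ => ?_
  rw [Matrix.submatrix_apply, key a c y, key b c y]

lemma UDA.ptrace_inr (M : Matrix (Idx (Sum.elim κA κB)) (Idx (Sum.elim κA κB)) ℂ)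
    (S₀ : Finset (Fin n)) (a b : ∀ j : {j // j ∈ S₀}, κB j) :
    ptrace κB S₀ (UDA.trL (M.submatrix UDA.gl UDA.gl)) a b
      = ptrace (Sum.elim κA κB) (S₀.map (UDA.inrEmb m n)) M
          (UDA.liftB S₀ a) (UDA.liftB S₀ b) := by
  classical
  unfold ptrace UDA.trL
  have key : ∀ (u : ∀ j : {j // j ∈ S₀}, κB j) (c : ∀ j : {j // j ∉ S₀}, κB j) (x : Idx κA),
      (fun i => if h : i ∈ S₀.map (UDA.inrEmb m n) then UDA.liftB S₀ u ⟨i, h⟩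
          else UDA.compEquivB S₀ (c, x) ⟨i, h⟩)
        = UDA.gl (x, fun j => if h : j ∈ S₀ then u ⟨j, h⟩ else c ⟨j, h⟩) := by
    intro u c x
    funext i
    cases i with
    | inr j =>
      by_cases hj : j ∈ S₀
      · rw [dif_pos (by simpa [UDA.inrEmb] using hj)]
        show UDA.liftB S₀ u ⟨Sum.inr j, _⟩ = _
        simp only [UDA.gl, UDA.glue]
        rw [dif_pos hj]
        rfl
      · rw [dif_neg (by simpa [UDA.inrEmb] using hj)]
        show UDA.compEquivB S₀ (c, x) ⟨Sum.inr j, _⟩ = _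
        simp only [UDA.gl, UDA.glue]
        rw [dif_neg hj]
        rfl
    | inl j =>
      rw [dif_neg (by simp [UDA.inrEmb])]
      rfl
  refine Eq.symm ?_
  rw [← Equiv.sum_comp (UDA.compEquivB S₀), Fintype.sum_prod_type]
  refine Finset.sum_congr rfl fun c _ => Finset.sum_congr rfl fun x _ => ?_
  rw [Matrix.submatrix_apply, key a c x, key b c x]

end UDAPlumb

theorem tensor_of_pure_UDA_states {m n : ℕ}
    (κA : Fin m → Type) (κB : Fin n → Type)
    [∀ i, Fintype (κA i)] [∀ i, Fintype (κB i)] (k : ℕ)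
    (ψ : Idx κA → ℂ) (hψ : ∑ a, ψ a * star (ψ a) = 1)
    (φ : Idx κB → ℂ) (hφ : ∑ b, φ b * star (φ b) = 1)
    (hψUDA : IsUDA κA k (pureState ψ))
    (hφUDA : IsUDA κB k (pureState φ)) :
    IsUDA (Sum.elim κA κB) k (tensProd (pureState ψ) (pureState φ)) := by
  classical
  intro σ hσ hmarg
  set ρt : Matrix (Idx (Sum.elim κA κB)) (Idx (Sum.elim κA κB)) ℂ :=
    tensProd (pureState ψ) (pureState φ) with hρt
  set σ' : Matrix (Idx κA × Idx κB) (Idx κA × Idx κB) ℂ :=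
    σ.submatrix UDA.gl UDA.gl with hσ'
  have hσ'psd : σ'.PosSemidef := hσ.1.submatrix UDA.gl
  have hσ'tr : σ'.trace = 1 := by
    rw [← hσ.2]
    exact Fintype.sum_equiv UDA.glEquiv _ _ (fun p => rfl)
  -- the pure-state tensor product, in product coordinates
  have hρt' : ∀ p q : Idx κA × Idx κB,
      ρt.submatrix UDA.gl UDA.gl p q = pureState ψ p.1 q.1 * pureState φ p.2 q.2 :=
    fun p q => rfl
  -- the right marginal of ρt' is pureState ψ
  have htrRρ : UDA.trR (ρt.submatrix UDA.gl UDA.gl) = pureState ψ := by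
    ext x x'
    show ∑ y, pureState ψ x x' * pureState φ y y = pureState ψ x x'
    rw [← Finset.mul_sum]
    have : ∑ y, pureState φ y y = 1 := hφ
    rw [this, mul_one]
  have htrLρ : UDA.trL (ρt.submatrix UDA.gl UDA.gl) = pureState φ := by
    ext y y'
    show ∑ x, pureState ψ x x * pureState φ y y' = pureState φ y y'
    rw [← Finset.sum_mul]
    have : ∑ x, pureState ψ x x = 1 := hψ
    rw [this, one_mul]
  -- the right marginal of σ' is pureState ψ
  have hmargA : ∀ S₀ : Finset (Fin m), S₀.card = k →
      ptrace κA S₀ (UDA.trR σ') = ptrace κA S₀ (pureState ψ) := by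
    intro S₀ hcard
    ext a b
    rw [hσ', UDA.ptrace_inl σ S₀ a b,
      hmarg (S₀.map (UDA.inlEmb m n)) (by rw [Finset.card_map]; exact hcard),
      ← UDA.ptrace_inl ρt S₀ a b, htrRρ]
  have hmargB : ∀ S₀ : Finset (Fin n), S₀.card = k →
      ptrace κB S₀ (UDA.trL σ') = ptrace κB S₀ (pureState φ) := by
    intro S₀ hcard
    ext a b
    rw [hσ', UDA.ptrace_inr σ S₀ a b,
      hmarg (S₀.map (UDA.inrEmb m n)) (by rw [Finset.card_map]; exact hcard),
      ← UDA.ptrace_inr ρt S₀ a b, htrLρ]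
  have hρA : UDA.trR σ' = pureState ψ :=
    hψUDA _ ⟨UDA.trR_posSemidef hσ'psd, by rw [UDA.trR_trace, hσ'tr]⟩ hmargA
  have hρB : UDA.trL σ' = pureState φ :=
    hφUDA _ ⟨UDA.trL_posSemidef hσ'psd, by rw [UDA.trL_trace, hσ'tr]⟩ hmargB
  -- purity: σ' factorizes
  have hpure : ∀ (x x' : Idx κA) (y y' : Idx κB),
      σ' (x, y) (x', y') = ψ x * star (ψ x') *
        (∑ u, ∑ u', star (ψ u) * (σ' (u, y) (u', y') * ψ u')) := by
    intro x x' y y'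
    refine UDA.purity hσ'psd hψ (fun x x' => ?_) x x' y y'
    show UDA.trR σ' x x' = ψ x * star (ψ x')
    rw [hρA]; rfl
  -- the remaining factor is pureState φ
  have hT : ∀ y y' : Idx κB,
      (∑ u, ∑ u', star (ψ u) * (σ' (u, y) (u', y') * ψ u')) = pureState φ y y' := by
    intro y y'
    have : UDA.trL σ' y y' =
        (∑ x, ψ x * star (ψ x)) * (∑ u, ∑ u', star (ψ u) * (σ' (u, y) (u', y') * ψ u')) := by
      show (∑ x, σ' (x, y) (x, y')) = _
      rw [Finset.sum_mul]
      refine Finset.sum_congr rfl fun x _ => ?_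
      rw [hpure x x y y']
    have hψ' : ∑ x, ψ x * star (ψ x) = 1 := hψ
    rw [hψ', one_mul] at this
    rw [← this, hρB]
  -- conclude
  funext a b
  have ha : UDA.gl (fun j => a (.inl j), fun j => a (.inr j)) = a := UDA.glEquiv.right_inv a
  have hb : UDA.gl (fun j => b (.inl j), fun j => b (.inr j)) = b := UDA.glEquiv.right_inv b
  have : σ a b = σ' ((fun j => a (.inl j), fun j => a (.inr j)))
      ((fun j => b (.inl j), fun j => b (.inr j))) := by
    rw [hσ', Matrix.submatrix_apply]
    exact (congrArg₂ σ ha hb).symm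
  rw [this]
  refine (hpure _ _ _ _).trans ?_
  refine (congrArg (ψ _ * star (ψ _) * ·) (hT _ _)).trans ?_
  rfl
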